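/- (Variance bound for the gradient of the Vaidya log-determinant) For every x in the interior of K, the vector g_x = A_x^⊤ (2Σ_x + β I_m − P_x^{(2)}) θ_x (which equals the gradient of x ↦ ½ log det V_x up to the stated identification) satisfies g_x^⊤ V_x^{-1} g_x ≤ 9 √(md). -/

import Mathlib

open Matrix MeasureTheory Real Set
open scoped ENNReal

noncomputable section

namespace PolytopeWalks

/-- Slackness `s_{x,i} = b_i − a_i^⊤ x`. -/
def slack {d m : ℕ} (A : Matrix (Fin m) (Fin d) ℝ) (b : Fin m → ℝ) (x : Fin d → ℝ)
    (i : Fin m) : ℝ :=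
  b i - A.mulVec x i

/-- The polytope `K = {x : A x ≤ b}`. -/
def poly {d m : ℕ} (A : Matrix (Fin m) (Fin d) ℝ) (b : Fin m → ℝ) : Set (Fin d → ℝ) :=
  {x | ∀ i, A.mulVec x i ≤ b i}

/-- The interior of the polytope: all slacks positive. -/
def interiorPoly {d m : ℕ} (A : Matrix (Fin m) (Fin d) ℝ) (b : Fin m → ℝ) :
    Set (Fin d → ℝ) :=
  {x | ∀ i, 0 < slack A b x i}

/-- Hessian of the logarithmic barrier, `∇²F_x = Σ_i a_i a_i^⊤ / s_{x,i}²`. -/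
def logHess {d m : ℕ} (A : Matrix (Fin m) (Fin d) ℝ) (b : Fin m → ℝ) (x : Fin d → ℝ) :
    Matrix (Fin d) (Fin d) ℝ :=
  ∑ i : Fin m, ((slack A b x i) ^ 2)⁻¹ • vecMulVec (A i) (A i)

/-- Leverage scores `σ_{x,i} = a_i^⊤ (∇²F_x)⁻¹ a_i / s_{x,i}²`. -/
def lev {d m : ℕ} (A : Matrix (Fin m) (Fin d) ℝ) (b : Fin m → ℝ) (x : Fin d → ℝ)
    (i : Fin m) : ℝ :=
  (A i) ⬝ᵥ ((logHess A b x)⁻¹ *ᵥ (A i)) / (slack A b x i) ^ 2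

/-- The Vaidya matrix `V_x = Σ_i (σ_{x,i} + d/m) a_i a_i^⊤ / s_{x,i}²`. -/
def vaidyaMat {d m : ℕ} (A : Matrix (Fin m) (Fin d) ℝ) (b : Fin m → ℝ) (x : Fin d → ℝ) :
    Matrix (Fin d) (Fin d) ℝ :=
  ∑ i : Fin m, ((lev A b x i + (d : ℝ) / m) / (slack A b x i) ^ 2) • vecMulVec (A i) (A i)

/-- Vaidya local norm `‖v‖_{V_x} = (v^⊤ V_x v)^{1/2}`. -/
def vNorm {d m : ℕ} (A : Matrix (Fin m) (Fin d) ℝ) (b : Fin m → ℝ) (x v : Fin d → ℝ) : ℝ :=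
  Real.sqrt (v ⬝ᵥ (vaidyaMat A b x *ᵥ v))

/-- Vaidya slack sensitivities `θ_{x,i} = a_i^⊤ V_x⁻¹ a_i / s_{x,i}²`. -/
def thetaV {d m : ℕ} (A : Matrix (Fin m) (Fin d) ℝ) (b : Fin m → ℝ) (x : Fin d → ℝ)
    (i : Fin m) : ℝ :=
  (A i) ⬝ᵥ ((vaidyaMat A b x)⁻¹ *ᵥ (A i)) / (slack A b x i) ^ 2

/-- Rescaled constraint matrix `A_x = S_x⁻¹ A`. -/
def Amat {d m : ℕ} (A : Matrix (Fin m) (Fin d) ℝ) (b : Fin m → ℝ) (x : Fin d → ℝ) :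
    Matrix (Fin m) (Fin d) ℝ :=
  Matrix.of fun i j => A i j / slack A b x i

/-- The projection matrix `P_x = A_x (A_x^⊤ A_x)⁻¹ A_x^⊤` onto the column space of `A_x`. -/
def projMat {d m : ℕ} (A : Matrix (Fin m) (Fin d) ℝ) (b : Fin m → ℝ) (x : Fin d → ℝ) :
    Matrix (Fin m) (Fin m) ℝ :=
  Amat A b x * (logHess A b x)⁻¹ * (Amat A b x)ᵀ

/-- Entrywise (Hadamard) square of a matrix. -/
def hadSq {n : ℕ} (M : Matrix (Fin n) (Fin n) ℝ) : Matrix (Fin n) (Fin n) ℝ :=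
  Matrix.of fun i j => (M i j) ^ 2

/-- The gradient of `x ↦ ½ log det V_x`:
`g_x = A_x^⊤ (2Σ_x + β I − P_x^{(2)}) θ_x` with `β = d/m`. -/
def gradLogDetV {d m : ℕ} (A : Matrix (Fin m) (Fin d) ℝ) (b : Fin m → ℝ)
    (x : Fin d → ℝ) : Fin d → ℝ :=
  (Amat A b x)ᵀ *ᵥ
    (((2 : ℝ) • Matrix.diagonal (lev A b x) +
        ((d : ℝ) / m) • (1 : Matrix (Fin m) (Fin m) ℝ) - hadSq (projMat A b x)) *ᵥ
      thetaV A b x)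

private lemma quadform_diag {m d : ℕ} (M : Matrix (Fin m) (Fin d) ℝ) (w : Fin m → ℝ)
    (v : Fin d → ℝ) :
    v ⬝ᵥ ((Mᵀ * Matrix.diagonal w * M) *ᵥ v) = ∑ i, w i * ((M *ᵥ v) i) ^ 2 := by
  rw [← Matrix.mulVec_mulVec, ← Matrix.mulVec_mulVec, Matrix.dotProduct_mulVec,
    Matrix.vecMul_transpose]
  simp [Matrix.mulVec_diagonal, dotProduct]
  exact Finset.sum_congr rfl fun i _ => by ring

private lemma trace_mul_vecMulVec {d : ℕ} (N : Matrix (Fin d) (Fin d) ℝ) (u v : Fin d → ℝ) :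
    Matrix.trace (N * Matrix.vecMulVec u v) = v ⬝ᵥ (N *ᵥ u) := by
  simp [Matrix.trace, Matrix.diag, Matrix.mul_apply, Matrix.vecMulVec_apply, dotProduct,
    Matrix.mulVec, Finset.mul_sum]
  exact Finset.sum_congr rfl fun i _ => Finset.sum_congr rfl fun j _ => by ring

private lemma sandwich_apply {m d : ℕ} (B : Matrix (Fin m) (Fin d) ℝ)
    (N : Matrix (Fin d) (Fin d) ℝ) (i : Fin m) :
    (B * N * Bᵀ) i i = (B i) ⬝ᵥ (N *ᵥ (B i)) := by
  simp [Matrix.mul_apply, dotProduct, Matrix.mulVec, Finset.sum_mul, Finset.mul_sum]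
  rw [Finset.sum_comm]
  exact Finset.sum_congr rfl fun a _ => Finset.sum_congr rfl fun c _ => by ring

-- ### structural lemmas

private lemma Amat_mulVec {d m : ℕ} (A : Matrix (Fin m) (Fin d) ℝ) (b : Fin m → ℝ)
    (x : Fin d → ℝ) (v : Fin d → ℝ) (i : Fin m) :
    (Amat A b x *ᵥ v) i = (A *ᵥ v) i / slack A b x i := by
  simp [Amat, Matrix.mulVec, dotProduct, Finset.sum_div]
  exact Finset.sum_congr rfl fun j _ => by ring

private lemma Amat_row {d m : ℕ} (A : Matrix (Fin m) (Fin d) ℝ) (b : Fin m → ℝ)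
    (x : Fin d → ℝ) (i : Fin m) :
    Amat A b x i = (slack A b x i)⁻¹ • (A i) := by
  ext j; simp [Amat, div_eq_inv_mul]

private lemma logHess_eq {d m : ℕ} (A : Matrix (Fin m) (Fin d) ℝ) (b : Fin m → ℝ)
    (x : Fin d → ℝ) (hx : x ∈ interiorPoly A b) :
    logHess A b x = (Amat A b x)ᵀ * Amat A b x := by
  ext j k
  rw [Matrix.mul_apply]
  simp only [logHess, Matrix.sum_apply, Matrix.smul_apply, Matrix.vecMulVec_apply,
    smul_eq_mul, Matrix.transpose_apply, Amat, Matrix.of_apply]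
  refine Finset.sum_congr rfl fun i _ => ?_
  have h := (hx i).ne'
  rw [div_mul_div_comm, ← sq, div_eq_inv_mul]

private lemma vaidya_eq {d m : ℕ} (A : Matrix (Fin m) (Fin d) ℝ) (b : Fin m → ℝ)
    (x : Fin d → ℝ) (hx : x ∈ interiorPoly A b) :
    vaidyaMat A b x =
      (Amat A b x)ᵀ * Matrix.diagonal (fun i => lev A b x i + (d : ℝ) / m) * Amat A b x := by
  rw [Matrix.mul_assoc]
  ext j k
  rw [Matrix.mul_apply]
  simp only [vaidyaMat, Matrix.sum_apply, Matrix.smul_apply, Matrix.vecMulVec_apply,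
    smul_eq_mul, Matrix.transpose_apply, Matrix.diagonal_mul, Amat, Matrix.of_apply]
  refine Finset.sum_congr rfl fun i _ => ?_
  have h := (hx i).ne'
  field_simp

private lemma qf_logHess {d m : ℕ} (A : Matrix (Fin m) (Fin d) ℝ) (b : Fin m → ℝ)
    (x : Fin d → ℝ) (hx : x ∈ interiorPoly A b) (v : Fin d → ℝ) :
    v ⬝ᵥ (logHess A b x *ᵥ v) = ∑ i, ((Amat A b x *ᵥ v) i) ^ 2 := by
  have h : logHess A b x =
      (Amat A b x)ᵀ * Matrix.diagonal (fun _ : Fin m => (1 : ℝ)) * Amat A b x := by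
    rw [logHess_eq A b x hx, Matrix.diagonal_one, Matrix.mul_one]
  rw [h, quadform_diag]
  simp

private lemma qf_vaidya {d m : ℕ} (A : Matrix (Fin m) (Fin d) ℝ) (b : Fin m → ℝ)
    (x : Fin d → ℝ) (hx : x ∈ interiorPoly A b) (v : Fin d → ℝ) :
    v ⬝ᵥ (vaidyaMat A b x *ᵥ v) =
      ∑ i, (lev A b x i + (d : ℝ) / m) * ((Amat A b x *ᵥ v) i) ^ 2 := by
  rw [vaidya_eq A b x hx, quadform_diag]

private lemma Amat_mulVec_ne {d m : ℕ} (A : Matrix (Fin m) (Fin d) ℝ) (b : Fin m → ℝ)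
    (x : Fin d → ℝ) (hx : x ∈ interiorPoly A b) (hrank : A.rank = d)
    (v : Fin d → ℝ) (hv : v ≠ 0) : Amat A b x *ᵥ v ≠ 0 := by
  have hker : LinearMap.ker (A.mulVecLin) = ⊥ := by
    have h1 := LinearMap.finrank_range_add_finrank_ker (A.mulVecLin)
    have h2 : Module.finrank ℝ (LinearMap.range A.mulVecLin) = d := hrank
    rw [h2, show Module.finrank ℝ (Fin d → ℝ) = d by simp] at h1
    have h3 : Module.finrank ℝ (LinearMap.ker A.mulVecLin) = 0 := by omega
    exact Submodule.finrank_eq_zero.mp h3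
  have hA : A *ᵥ v ≠ 0 := by
    intro hc
    have h4 : A.mulVecLin v = 0 := by simpa [Matrix.mulVecLin_apply] using hc
    rw [← LinearMap.mem_ker, hker, Submodule.mem_bot] at h4
    exact hv h4
  obtain ⟨i, hi⟩ := Function.ne_iff.mp hA
  intro hc
  apply hi
  have h5 := congrFun hc i
  rw [Amat_mulVec] at h5
  have h6 := (hx i).ne'
  simp only [Pi.zero_apply] at h5 ⊢
  exact (div_eq_zero_iff.mp h5).resolve_right h6

private lemma logHess_posDef {d m : ℕ} (A : Matrix (Fin m) (Fin d) ℝ) (b : Fin m → ℝ)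
    (x : Fin d → ℝ) (hx : x ∈ interiorPoly A b) (hrank : A.rank = d) :
    (logHess A b x).PosDef := by
  rw [Matrix.posDef_iff_dotProduct_mulVec]
  constructor
  · show (logHess A b x)ᴴ = _
    rw [Matrix.conjTranspose_eq_transpose_of_trivial, logHess_eq A b x hx,
      Matrix.transpose_mul, Matrix.transpose_transpose]
  · intro v hv
    rw [show star v = v from by simp, qf_logHess A b x hx v]
    obtain ⟨i, hi⟩ := Function.ne_iff.mp (Amat_mulVec_ne A b x hx hrank v hv)
    simp only [Pi.zero_apply] at hi
    exact Finset.sum_pos' (fun j _ => sq_nonneg _) ⟨i, Finset.mem_univ i, by positivity⟩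

private lemma lev_nonneg {d m : ℕ} (A : Matrix (Fin m) (Fin d) ℝ) (b : Fin m → ℝ)
    (x : Fin d → ℝ) (hx : x ∈ interiorPoly A b) (hrank : A.rank = d) (i : Fin m) :
    0 ≤ lev A b x i := by
  have h1 := ((logHess_posDef A b x hx hrank).inv.posSemidef).dotProduct_mulVec_nonneg (A i)
  rw [show star (A i) = A i from by simp] at h1
  exact div_nonneg h1 (sq_nonneg _)

private lemma vaidya_posDef {d m : ℕ} (hd : 0 < d) (hdm : d ≤ m)
    (A : Matrix (Fin m) (Fin d) ℝ) (b : Fin m → ℝ)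
    (x : Fin d → ℝ) (hx : x ∈ interiorPoly A b) (hrank : A.rank = d) :
    (vaidyaMat A b x).PosDef := by
  have hm : 0 < m := lt_of_lt_of_le hd hdm
  have hβ : 0 < (d : ℝ) / m := div_pos (by exact_mod_cast hd) (by exact_mod_cast hm)
  rw [Matrix.posDef_iff_dotProduct_mulVec]
  constructor
  · show (vaidyaMat A b x)ᴴ = _
    rw [Matrix.conjTranspose_eq_transpose_of_trivial, vaidya_eq A b x hx,
      Matrix.transpose_mul, Matrix.transpose_mul, Matrix.transpose_transpose,
      Matrix.diagonal_transpose, Matrix.mul_assoc]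
  · intro v hv
    rw [show star v = v from by simp, qf_vaidya A b x hx v]
    obtain ⟨i, hi⟩ := Function.ne_iff.mp (Amat_mulVec_ne A b x hx hrank v hv)
    simp only [Pi.zero_apply] at hi
    refine Finset.sum_pos' (fun j _ => mul_nonneg ?_ (sq_nonneg _))
      ⟨i, Finset.mem_univ i, mul_pos ?_ (by positivity)⟩
    · exact add_nonneg (lev_nonneg A b x hx hrank j) hβ.le
    · exact add_pos_of_nonneg_of_pos (lev_nonneg A b x hx hrank i) hβ

private lemma logHess_det_unit {d m : ℕ} (A : Matrix (Fin m) (Fin d) ℝ) (b : Fin m → ℝ)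
    (x : Fin d → ℝ) (hx : x ∈ interiorPoly A b) (hrank : A.rank = d) :
    IsUnit (logHess A b x).det :=
  (Matrix.isUnit_iff_isUnit_det _).mp (logHess_posDef A b x hx hrank).isUnit

private lemma vaidya_det_unit {d m : ℕ} (hd : 0 < d) (hdm : d ≤ m)
    (A : Matrix (Fin m) (Fin d) ℝ) (b : Fin m → ℝ)
    (x : Fin d → ℝ) (hx : x ∈ interiorPoly A b) (hrank : A.rank = d) :
    IsUnit (vaidyaMat A b x).det :=
  (Matrix.isUnit_iff_isUnit_det _).mp (vaidya_posDef hd hdm A b x hx hrank).isUnit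

private lemma logHess_inv_symm {d m : ℕ} (A : Matrix (Fin m) (Fin d) ℝ) (b : Fin m → ℝ)
    (x : Fin d → ℝ) (hx : x ∈ interiorPoly A b) :
    ((logHess A b x)⁻¹)ᵀ = (logHess A b x)⁻¹ := by
  rw [Matrix.transpose_nonsing_inv]
  congr 1
  rw [logHess_eq A b x hx, Matrix.transpose_mul, Matrix.transpose_transpose]

private lemma projMat_symm {d m : ℕ} (A : Matrix (Fin m) (Fin d) ℝ) (b : Fin m → ℝ)
    (x : Fin d → ℝ) (hx : x ∈ interiorPoly A b) :
    (projMat A b x)ᵀ = projMat A b x := by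
  rw [projMat, Matrix.transpose_mul, Matrix.transpose_mul, Matrix.transpose_transpose,
    logHess_inv_symm A b x hx, Matrix.mul_assoc]

private lemma projMat_idem {d m : ℕ} (A : Matrix (Fin m) (Fin d) ℝ) (b : Fin m → ℝ)
    (x : Fin d → ℝ) (hx : x ∈ interiorPoly A b) (hrank : A.rank = d) :
    projMat A b x * projMat A b x = projMat A b x := by
  have h1 : (Amat A b x)ᵀ * Amat A b x = logHess A b x := (logHess_eq A b x hx).symm
  have h2 := Matrix.nonsing_inv_mul _ (logHess_det_unit A b x hx hrank)
  calc projMat A b x * projMat A b x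
      = Amat A b x * ((logHess A b x)⁻¹ * (((Amat A b x)ᵀ * Amat A b x) *
          (logHess A b x)⁻¹)) * (Amat A b x)ᵀ := by
        simp only [projMat, Matrix.mul_assoc]
    _ = projMat A b x := by
        rw [h1, ← Matrix.mul_assoc (logHess A b x)⁻¹, h2, Matrix.one_mul, projMat,
          Matrix.mul_assoc]

private lemma lev_eq_proj_diag {d m : ℕ} (A : Matrix (Fin m) (Fin d) ℝ) (b : Fin m → ℝ)
    (x : Fin d → ℝ) (hx : x ∈ interiorPoly A b) (i : Fin m) :
    projMat A b x i i = lev A b x i := by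
  have hs := (hx i).ne'
  rw [projMat, sandwich_apply, Amat_row, smul_dotProduct, Matrix.mulVec_smul,
    dotProduct_smul, lev]
  simp only [smul_eq_mul]
  rw [← mul_assoc, ← mul_inv, ← sq, inv_mul_eq_div]

private lemma proj_row_sq_sum {d m : ℕ} (A : Matrix (Fin m) (Fin d) ℝ) (b : Fin m → ℝ)
    (x : Fin d → ℝ) (hx : x ∈ interiorPoly A b) (hrank : A.rank = d) (i : Fin m) :
    ∑ j, (projMat A b x i j) ^ 2 = lev A b x i := by
  have h1 : ∀ j, projMat A b x j i = projMat A b x i j := fun j =>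
    congrFun (congrFun (projMat_symm A b x hx) i) j
  calc ∑ j, (projMat A b x i j) ^ 2
      = ∑ j, projMat A b x i j * projMat A b x j i :=
        Finset.sum_congr rfl fun j _ => by rw [h1 j]; ring
    _ = (projMat A b x * projMat A b x) i i := (Matrix.mul_apply).symm
    _ = lev A b x i := by rw [projMat_idem A b x hx hrank, lev_eq_proj_diag A b x hx]

private lemma theta_nonneg {d m : ℕ} (hd : 0 < d) (hdm : d ≤ m)
    (A : Matrix (Fin m) (Fin d) ℝ) (b : Fin m → ℝ)
    (x : Fin d → ℝ) (hx : x ∈ interiorPoly A b) (hrank : A.rank = d) (i : Fin m) :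
    0 ≤ thetaV A b x i := by
  have h1 := ((vaidya_posDef hd hdm A b x hx hrank).inv.posSemidef).dotProduct_mulVec_nonneg (A i)
  rw [show star (A i) = A i from by simp] at h1
  exact div_nonneg h1 (sq_nonneg _)

private lemma sum_theta_eq {d m : ℕ} (hd : 0 < d) (hdm : d ≤ m)
    (A : Matrix (Fin m) (Fin d) ℝ) (b : Fin m → ℝ)
    (x : Fin d → ℝ) (hx : x ∈ interiorPoly A b) (hrank : A.rank = d) :
    ∑ i, (lev A b x i + (d : ℝ) / m) * thetaV A b x i = d := by
  have h3 : ∀ N : Matrix (Fin d) (Fin d) ℝ, Matrix.trace (N * vaidyaMat A b x) =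
      ∑ i, ((lev A b x i + (d : ℝ) / m) / (slack A b x i) ^ 2) *
        ((A i) ⬝ᵥ (N *ᵥ (A i))) := by
    intro N
    rw [vaidyaMat, Matrix.mul_sum, Matrix.trace_sum]
    exact Finset.sum_congr rfl fun i _ => by
      rw [Matrix.mul_smul, Matrix.trace_smul, trace_mul_vecMulVec, smul_eq_mul]
  have h4 := h3 (vaidyaMat A b x)⁻¹
  rw [Matrix.nonsing_inv_mul _ (vaidya_det_unit hd hdm A b x hx hrank),
    Matrix.trace_one] at h4
  simp only [Fintype.card_fin] at h4
  conv_rhs => rw [h4]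
  exact Finset.sum_congr rfl fun i _ => by rw [thetaV]; ring

private lemma mulVec_inv_cancel {d m : ℕ} (hd : 0 < d) (hdm : d ≤ m)
    (A : Matrix (Fin m) (Fin d) ℝ) (b : Fin m → ℝ)
    (x : Fin d → ℝ) (hx : x ∈ interiorPoly A b) (hrank : A.rank = d) (u : Fin d → ℝ) :
    vaidyaMat A b x *ᵥ ((vaidyaMat A b x)⁻¹ *ᵥ u) = u := by
  rw [Matrix.mulVec_mulVec, Matrix.mul_nonsing_inv _ (vaidya_det_unit hd hdm A b x hx hrank),
    Matrix.one_mulVec]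

private lemma Dtheta_le_one {d m : ℕ} (hd : 0 < d) (hdm : d ≤ m)
    (A : Matrix (Fin m) (Fin d) ℝ) (b : Fin m → ℝ)
    (x : Fin d → ℝ) (hx : x ∈ interiorPoly A b) (hrank : A.rank = d) (i : Fin m) :
    (lev A b x i + (d : ℝ) / m) * thetaV A b x i ≤ 1 := by
  have hm : 0 < m := lt_of_lt_of_le hd hdm
  have hβ : 0 < (d : ℝ) / m := div_pos (by exact_mod_cast hd) (by exact_mod_cast hm)
  have hsi : 0 < slack A b x i := hx i
  set z : Fin d → ℝ := (vaidyaMat A b x)⁻¹ *ᵥ (A i) with hz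
  set q : ℝ := (A i) ⬝ᵥ z with hqdef
  have hθ : thetaV A b x i = q / slack A b x i ^ 2 := rfl
  have hq0 : 0 ≤ q := by
    have h1 := ((vaidya_posDef hd hdm A b x hx hrank).inv.posSemidef).dotProduct_mulVec_nonneg (A i)
    rwa [show star (A i) = A i from by simp] at h1
  have hVz : vaidyaMat A b x *ᵥ z = A i := mulVec_inv_cancel hd hdm A b x hx hrank _
  have hAz : (Amat A b x *ᵥ z) i = q / slack A b x i := by
    rw [Amat_mulVec]; rfl
  have hlow : (lev A b x i + (d : ℝ) / m) * ((Amat A b x *ᵥ z) i) ^ 2 ≤ q := by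
    have h2 : z ⬝ᵥ (vaidyaMat A b x *ᵥ z) = q := by
      rw [hVz]; exact dotProduct_comm z (A i)
    rw [← h2, qf_vaidya A b x hx z]
    exact Finset.single_le_sum
      (f := fun j => (lev A b x j + (d : ℝ) / m) * ((Amat A b x *ᵥ z) j) ^ 2)
      (fun j _ => mul_nonneg (add_nonneg (lev_nonneg A b x hx hrank j) hβ.le) (sq_nonneg _))
      (Finset.mem_univ i)
  rw [hAz] at hlow
  set c : ℝ := lev A b x i + (d : ℝ) / m with hc
  have hc0 : 0 ≤ c := add_nonneg (lev_nonneg A b x hx hrank i) hβ.le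
  rw [hθ]
  have hs2 : 0 < slack A b x i ^ 2 := by positivity
  rcases eq_or_lt_of_le hq0 with h | hq
  · rw [← h]; simp
  · have h5 : c * q ^ 2 ≤ q * slack A b x i ^ 2 := by
      have h6 := mul_le_mul_of_nonneg_right hlow hs2.le
      calc c * q ^ 2 = c * (q / slack A b x i) ^ 2 * slack A b x i ^ 2 := by
            field_simp
        _ ≤ q * slack A b x i ^ 2 := h6
    rw [← mul_div_assoc, div_le_one hs2]
    nlinarith [h5, hq]

private lemma beta_theta_le_lev {d m : ℕ} (hd : 0 < d) (hdm : d ≤ m)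
    (A : Matrix (Fin m) (Fin d) ℝ) (b : Fin m → ℝ)
    (x : Fin d → ℝ) (hx : x ∈ interiorPoly A b) (hrank : A.rank = d) (i : Fin m) :
    ((d : ℝ) / m) * thetaV A b x i ≤ lev A b x i := by
  have hm : 0 < m := lt_of_lt_of_le hd hdm
  have hβ : 0 < (d : ℝ) / m := div_pos (by exact_mod_cast hd) (by exact_mod_cast hm)
  have hsi : 0 < slack A b x i := hx i
  have hs2 : 0 < slack A b x i ^ 2 := by positivity
  set z : Fin d → ℝ := (vaidyaMat A b x)⁻¹ *ᵥ (A i) with hz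
  set w : Fin d → ℝ := (logHess A b x)⁻¹ *ᵥ (A i) with hwdef
  set q : ℝ := (A i) ⬝ᵥ z with hqdef
  set r : ℝ := (A i) ⬝ᵥ w with hrdef
  have hθ : thetaV A b x i = q / slack A b x i ^ 2 := rfl
  have hlev : lev A b x i = r / slack A b x i ^ 2 := rfl
  have hq0 : 0 ≤ q := by
    have h1 := ((vaidya_posDef hd hdm A b x hx hrank).inv.posSemidef).dotProduct_mulVec_nonneg (A i)
    rwa [show star (A i) = A i from by simp] at h1
  have hr0 : 0 ≤ r := by
    have h1 := ((logHess_posDef A b x hx hrank).inv.posSemidef).dotProduct_mulVec_nonneg (A i)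
    rwa [show star (A i) = A i from by simp] at h1
  have hHw : logHess A b x *ᵥ w = A i := by
    rw [hwdef, Matrix.mulVec_mulVec, Matrix.mul_nonsing_inv _ (logHess_det_unit A b x hx hrank),
      Matrix.one_mulVec]
  -- q as an inner product of Ax z and Ax w
  have hq_eq : q = ∑ k, (Amat A b x *ᵥ z) k * (Amat A b x *ᵥ w) k := by
    have h1 : q = z ⬝ᵥ (logHess A b x *ᵥ w) := by rw [hHw]; exact dotProduct_comm _ _
    rw [h1, logHess_eq A b x hx, ← Matrix.mulVec_mulVec, Matrix.dotProduct_mulVec,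
      Matrix.vecMul_transpose]
    rfl
  -- Cauchy–Schwarz
  have hCS : q ^ 2 ≤ (z ⬝ᵥ (logHess A b x *ᵥ z)) * (w ⬝ᵥ (logHess A b x *ᵥ w)) := by
    rw [hq_eq, qf_logHess A b x hx z, qf_logHess A b x hx w]
    exact Finset.sum_mul_sq_le_sq_mul_sq _ _ _
  have hwHw : w ⬝ᵥ (logHess A b x *ᵥ w) = r := by
    rw [hHw]; exact dotProduct_comm _ _
  have hzHz : ((d : ℝ) / m) * (z ⬝ᵥ (logHess A b x *ᵥ z)) ≤ q := by
    have h2 : z ⬝ᵥ (vaidyaMat A b x *ᵥ z) = q := by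
      rw [mulVec_inv_cancel hd hdm A b x hx hrank]; exact dotProduct_comm _ _
    rw [← h2, qf_logHess A b x hx z, qf_vaidya A b x hx z, Finset.mul_sum]
    refine Finset.sum_le_sum fun j _ => ?_
    have := lev_nonneg A b x hx hrank j
    nlinarith [sq_nonneg ((Amat A b x *ᵥ z) j)]
  -- conclude : β * q ≤ r
  have hkey : ((d : ℝ) / m) * q ≤ r := by
    rcases eq_or_lt_of_le hq0 with h | hq
    · rw [← h]; simpa using hr0
    · have hzHz0 : 0 ≤ z ⬝ᵥ (logHess A b x *ᵥ z) := by
        rw [qf_logHess A b x hx z]; positivity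
      have h3 : ((d : ℝ) / m) * q ^ 2 ≤ q * r := by
        calc ((d : ℝ) / m) * q ^ 2 ≤ ((d : ℝ) / m) *
              ((z ⬝ᵥ (logHess A b x *ᵥ z)) * r) := by
              rw [← hwHw]; nlinarith [hCS]
          _ ≤ q * r := by nlinarith [hzHz, hr0]
      nlinarith [h3, hq]
  rw [hθ, hlev, ← mul_div_assoc]
  gcongr

private lemma theta_le_sqrt {d m : ℕ} (hd : 0 < d) (hdm : d ≤ m)
    (A : Matrix (Fin m) (Fin d) ℝ) (b : Fin m → ℝ)
    (x : Fin d → ℝ) (hx : x ∈ interiorPoly A b) (hrank : A.rank = d) (i : Fin m) :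
    thetaV A b x i ≤ Real.sqrt ((m : ℝ) / d) := by
  have hm : 0 < m := lt_of_lt_of_le hd hdm
  have hβ : 0 < (d : ℝ) / m := div_pos (by exact_mod_cast hd) (by exact_mod_cast hm)
  have hu0 : 0 ≤ Real.sqrt ((m : ℝ) / d) := Real.sqrt_nonneg _
  have hdne : ((d : ℝ)) ≠ 0 := by positivity
  have hmne : ((m : ℝ)) ≠ 0 := by exact_mod_cast hm.ne'
  have hβu : ((d : ℝ) / m) * Real.sqrt ((m : ℝ) / d) = Real.sqrt ((d : ℝ) / m) := by
    have h1 : ((d : ℝ) / m) * Real.sqrt ((m : ℝ) / d) =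
        Real.sqrt ((((d : ℝ) / m) ^ 2) * ((m : ℝ) / d)) := by
      rw [Real.sqrt_mul (by positivity), Real.sqrt_sq hβ.le]
    rw [h1]
    congr 1
    field_simp
  have huβ : Real.sqrt ((m : ℝ) / d) * Real.sqrt ((d : ℝ) / m) = 1 := by
    rw [← Real.sqrt_mul (by positivity), show ((m : ℝ) / d) * ((d : ℝ) / m) = 1 by
      field_simp]
    exact Real.sqrt_one
  by_cases hcase : lev A b x i ≤ Real.sqrt ((d : ℝ) / m)
  · have h2 := beta_theta_le_lev hd hdm A b x hx hrank i
    have h3 : ((d : ℝ) / m) * thetaV A b x i ≤ ((d : ℝ) / m) * Real.sqrt ((m : ℝ) / d) := by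
      rw [hβu]
      exact le_trans h2 hcase
    exact le_of_mul_le_mul_left h3 hβ
  · push_neg at hcase
    have h2 := Dtheta_le_one hd hdm A b x hx hrank i
    have hθ0 := theta_nonneg hd hdm A b x hx hrank i
    have hlev0 := lev_nonneg A b x hx hrank i
    have h4 : 0 < lev A b x i + (d : ℝ) / m := by linarith
    have h5 : (lev A b x i + (d : ℝ) / m) * thetaV A b x i ≤
        (lev A b x i + (d : ℝ) / m) * Real.sqrt ((m : ℝ) / d) := by
      calc (lev A b x i + (d : ℝ) / m) * thetaV A b x i ≤ 1 := h2
        _ = Real.sqrt ((m : ℝ) / d) * Real.sqrt ((d : ℝ) / m) := huβ.symm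
        _ ≤ (lev A b x i + (d : ℝ) / m) * Real.sqrt ((m : ℝ) / d) := by
            nlinarith [hu0, hβ, hcase]
    exact le_of_mul_le_mul_left h5 h4

private lemma grad_eq {d m : ℕ} (A : Matrix (Fin m) (Fin d) ℝ) (b : Fin m → ℝ)
    (x : Fin d → ℝ) :
    gradLogDetV A b x = (Amat A b x)ᵀ *ᵥ (fun i =>
      (2 * lev A b x i + (d : ℝ) / m) * thetaV A b x i -
        ∑ j, (projMat A b x i j) ^ 2 * thetaV A b x j) := by
  have hvec : (((2 : ℝ) • Matrix.diagonal (lev A b x) +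
      ((d : ℝ) / m) • (1 : Matrix (Fin m) (Fin m) ℝ) - hadSq (projMat A b x)) *ᵥ thetaV A b x) =
      fun i => (2 * lev A b x i + (d : ℝ) / m) * thetaV A b x i -
        ∑ j, (projMat A b x i j) ^ 2 * thetaV A b x j := by
    funext i
    rw [Matrix.sub_mulVec, Matrix.add_mulVec, Matrix.smul_mulVec,
      Matrix.smul_mulVec]
    simp only [Pi.sub_apply, Pi.add_apply, Pi.smul_apply, smul_eq_mul,
      Matrix.mulVec_diagonal, Matrix.one_mulVec]
    have hQ : (hadSq (projMat A b x) *ᵥ thetaV A b x) i =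
        ∑ j, (projMat A b x i j) ^ 2 * thetaV A b x j := by
      simp [hadSq, Matrix.mulVec, dotProduct]
    rw [hQ]
    ring
  rw [gradLogDetV, hvec]

/-- Variance bound for the gradient of the Vaidya log-determinant:
`g_x^⊤ V_x⁻¹ g_x ≤ 9 √(md)` for every interior point `x`. -/
theorem gradient_logdet_variance_bound (d m : ℕ) (hd : 0 < d) (hdm : d ≤ m)
    (A : Matrix (Fin m) (Fin d) ℝ) (b : Fin m → ℝ) (hrank : A.rank = d)
    (x : Fin d → ℝ) (hx : x ∈ interiorPoly A b) :
    gradLogDetV A b x ⬝ᵥ ((vaidyaMat A b x)⁻¹ *ᵥ gradLogDetV A b x) ≤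
      9 * Real.sqrt ((m : ℝ) * d) := by
  have hm : 0 < m := lt_of_lt_of_le hd hdm
  have hβ : 0 < (d : ℝ) / m := div_pos (by exact_mod_cast hd) (by exact_mod_cast hm)
  have hT0 : 0 ≤ Real.sqrt ((m : ℝ) * d) := Real.sqrt_nonneg _
  set u0 : ℝ := Real.sqrt ((m : ℝ) / d) with hu0def
  have hu00 : 0 ≤ u0 := Real.sqrt_nonneg _
  have hθle : ∀ i, thetaV A b x i ≤ u0 := theta_le_sqrt hd hdm A b x hx hrank
  have hθ0 : ∀ i, 0 ≤ thetaV A b x i := theta_nonneg hd hdm A b x hx hrank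
  have hlev0 : ∀ i, 0 ≤ lev A b x i := lev_nonneg A b x hx hrank
  set D : Fin m → ℝ := fun i => lev A b x i + (d : ℝ) / m with hD
  have hDpos : ∀ i, 0 < D i := fun i => by rw [hD]; dsimp only; linarith [hlev0 i]
  have hDθ0 : ∀ i, 0 ≤ D i * thetaV A b x i :=
    fun i => mul_nonneg (hDpos i).le (hθ0 i)
  have hsum : ∑ i, D i * thetaV A b x i = d := by
    rw [hD]; exact sum_theta_eq hd hdm A b x hx hrank
  have hsum2 : ∑ i, D i * thetaV A b x i ^ 2 ≤ u0 * d := by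
    calc ∑ i, D i * thetaV A b x i ^ 2 ≤ ∑ i, D i * thetaV A b x i * u0 := by
          refine Finset.sum_le_sum fun i _ => ?_
          nlinarith [mul_nonneg (hDθ0 i) (sub_nonneg.mpr (hθle i))]
      _ = u0 * ∑ i, D i * thetaV A b x i := by rw [← Finset.sum_mul, mul_comm]
      _ = u0 * d := by rw [hsum]
  set w : Fin m → ℝ := fun i => (2 * lev A b x i + (d : ℝ) / m) * thetaV A b x i -
      ∑ j, (projMat A b x i j) ^ 2 * thetaV A b x j with hw
  have hg : gradLogDetV A b x = (Amat A b x)ᵀ *ᵥ w := grad_eq A b x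
  set z : Fin d → ℝ := (vaidyaMat A b x)⁻¹ *ᵥ gradLogDetV A b x with hz
  set p : Fin m → ℝ := Amat A b x *ᵥ z with hp
  have hVz : vaidyaMat A b x *ᵥ z = gradLogDetV A b x :=
    mulVec_inv_cancel hd hdm A b x hx hrank _
  have e2 : gradLogDetV A b x ⬝ᵥ z = ∑ i, D i * (p i) ^ 2 := by
    have h1 : gradLogDetV A b x ⬝ᵥ z = z ⬝ᵥ (vaidyaMat A b x *ᵥ z) := by
      rw [hVz]
      exact dotProduct_comm _ _
    rw [h1, qf_vaidya A b x hx z]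
  have e1 : gradLogDetV A b x ⬝ᵥ z = ∑ i, w i * p i := by
    rw [hg, dotProduct_comm, Matrix.dotProduct_mulVec, Matrix.vecMul_transpose,
      dotProduct_comm]
    rfl
  have hq0 : 0 ≤ ∑ i, D i * (p i) ^ 2 :=
    Finset.sum_nonneg fun i _ => mul_nonneg (hDpos i).le (sq_nonneg _)
  set C : ℝ := ∑ i, w i ^ 2 / D i with hC
  have hC0 : 0 ≤ C :=
    Finset.sum_nonneg fun i _ => div_nonneg (sq_nonneg _) (hDpos i).le
  have hCS : (∑ i, w i * p i) ^ 2 ≤ C * ∑ i, D i * (p i) ^ 2 := by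
    have h2 := Finset.sum_mul_sq_le_sq_mul_sq Finset.univ
      (fun i => w i / Real.sqrt (D i)) (fun i => Real.sqrt (D i) * p i)
    calc (∑ i, w i * p i) ^ 2
        = (∑ i, (w i / Real.sqrt (D i)) * (Real.sqrt (D i) * p i)) ^ 2 := by
          congr 1
          refine Finset.sum_congr rfl fun i _ => ?_
          have hne : Real.sqrt (D i) ≠ 0 := (Real.sqrt_pos.mpr (hDpos i)).ne'
          field_simp
      _ ≤ (∑ i, (w i / Real.sqrt (D i)) ^ 2) * ∑ i, (Real.sqrt (D i) * p i) ^ 2 := h2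
      _ = C * ∑ i, D i * (p i) ^ 2 := by
          congr 1
          · rw [hC]
            exact Finset.sum_congr rfl fun i _ => by
              rw [div_pow, Real.sq_sqrt (hDpos i).le]
          · exact Finset.sum_congr rfl fun i _ => by
              rw [mul_pow, Real.sq_sqrt (hDpos i).le]
  have hqC : gradLogDetV A b x ⬝ᵥ z ≤ C := by
    rcases eq_or_lt_of_le hq0 with h | h
    · rw [e2, ← h]
      exact hC0
    · have hq : 0 < gradLogDetV A b x ⬝ᵥ z := by rw [e2]; exact h
      have h3 := hCS
      rw [← e1, ← e2] at h3
      nlinarith [h3, hq]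
  -- bound C
  have hProw : ∀ i, ∑ j, (projMat A b x i j) ^ 2 = lev A b x i :=
    proj_row_sq_sum A b x hx hrank
  have hPsymm : ∀ i j, projMat A b x j i = projMat A b x i j := fun i j =>
    congrFun (congrFun (projMat_symm A b x hx) i) j
  have hPcol : ∀ j, ∑ i, (projMat A b x i j) ^ 2 = lev A b x j := by
    intro j
    rw [← hProw j]
    exact Finset.sum_congr rfl fun i _ => by rw [hPsymm j i]
  have hB1 : ∑ i, ((2 * lev A b x i + (d : ℝ) / m) * thetaV A b x i) ^ 2 / D i
      ≤ 4 * (u0 * d) := by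
    calc ∑ i, ((2 * lev A b x i + (d : ℝ) / m) * thetaV A b x i) ^ 2 / D i
        ≤ ∑ i, 4 * (D i * thetaV A b x i ^ 2) := by
          refine Finset.sum_le_sum fun i _ => ?_
          rw [div_le_iff₀ (hDpos i), hD]
          dsimp only
          nlinarith [mul_nonneg (mul_nonneg hβ.le
            (by linarith [hlev0 i] : (0:ℝ) ≤ 4 * lev A b x i + 3 * ((d:ℝ)/m)))
            (sq_nonneg (thetaV A b x i))]
      _ = 4 * ∑ i, D i * thetaV A b x i ^ 2 := by rw [Finset.mul_sum]
      _ ≤ 4 * (u0 * d) := by linarith [hsum2]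
  have hB2 : ∑ i, (∑ j, (projMat A b x i j) ^ 2 * thetaV A b x j) ^ 2 / D i ≤ u0 * d := by
    have hstep : ∀ i, (∑ j, (projMat A b x i j) ^ 2 * thetaV A b x j) ^ 2 / D i ≤
        ∑ j, (projMat A b x i j) ^ 2 * thetaV A b x j ^ 2 := by
      intro i
      have hnn : 0 ≤ ∑ j, (projMat A b x i j) ^ 2 * thetaV A b x j ^ 2 :=
        Finset.sum_nonneg fun j _ => mul_nonneg (sq_nonneg _) (sq_nonneg _)
      have hcs : (∑ j, (projMat A b x i j) ^ 2 * thetaV A b x j) ^ 2 ≤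
          lev A b x i * ∑ j, (projMat A b x i j) ^ 2 * thetaV A b x j ^ 2 := by
        have h1 := Finset.sum_mul_sq_le_sq_mul_sq Finset.univ
          (fun j => projMat A b x i j) (fun j => projMat A b x i j * thetaV A b x j)
        calc (∑ j, (projMat A b x i j) ^ 2 * thetaV A b x j) ^ 2
            = (∑ j, projMat A b x i j * (projMat A b x i j * thetaV A b x j)) ^ 2 := by
              congr 1
              exact Finset.sum_congr rfl fun j _ => by ring
          _ ≤ (∑ j, (projMat A b x i j) ^ 2) *
                ∑ j, (projMat A b x i j * thetaV A b x j) ^ 2 := h1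
          _ = lev A b x i * ∑ j, (projMat A b x i j) ^ 2 * thetaV A b x j ^ 2 := by
              rw [hProw i]
              congr 1
              exact Finset.sum_congr rfl fun j _ => by ring
      rw [div_le_iff₀ (hDpos i)]
      calc (∑ j, (projMat A b x i j) ^ 2 * thetaV A b x j) ^ 2
          ≤ lev A b x i * ∑ j, (projMat A b x i j) ^ 2 * thetaV A b x j ^ 2 := hcs
        _ ≤ (∑ j, (projMat A b x i j) ^ 2 * thetaV A b x j ^ 2) * D i := by
            rw [mul_comm]
            refine mul_le_mul_of_nonneg_left ?_ hnn
            rw [hD]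
            dsimp only
            linarith [hβ]
    calc ∑ i, (∑ j, (projMat A b x i j) ^ 2 * thetaV A b x j) ^ 2 / D i
        ≤ ∑ i, ∑ j, (projMat A b x i j) ^ 2 * thetaV A b x j ^ 2 :=
          Finset.sum_le_sum fun i _ => hstep i
      _ = ∑ j, lev A b x j * thetaV A b x j ^ 2 := by
          rw [Finset.sum_comm]
          refine Finset.sum_congr rfl fun j _ => ?_
          rw [← Finset.sum_mul, hPcol j]
      _ ≤ ∑ j, D j * thetaV A b x j ^ 2 := by
          refine Finset.sum_le_sum fun j _ => ?_
          have h6 : lev A b x j ≤ D j := by rw [hD]; dsimp only; linarith [hβ]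
          exact mul_le_mul_of_nonneg_right h6 (sq_nonneg _)
      _ ≤ u0 * d := hsum2
  have hCbound : C ≤ 5 * (u0 * d) := by
    have hsplit : C ≤ (∑ i, ((2 * lev A b x i + (d : ℝ) / m) * thetaV A b x i) ^ 2 / D i) +
        ∑ i, (∑ j, (projMat A b x i j) ^ 2 * thetaV A b x j) ^ 2 / D i := by
      rw [hC, ← Finset.sum_add_distrib]
      refine Finset.sum_le_sum fun i _ => ?_
      rw [hw]
      dsimp only
      rw [← add_div, div_le_div_iff₀ (hDpos i) (hDpos i)]
      have hui : 0 ≤ (2 * lev A b x i + (d : ℝ) / m) * thetaV A b x i :=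
        mul_nonneg (by linarith [hlev0 i, hβ]) (hθ0 i)
      have hvi : 0 ≤ ∑ j, (projMat A b x i j) ^ 2 * thetaV A b x j :=
        Finset.sum_nonneg fun j _ => mul_nonneg (sq_nonneg _) (hθ0 j)
      nlinarith [mul_nonneg (mul_nonneg hui hvi) (hDpos i).le]
    linarith [hB1, hB2, hsplit]
  have hdpos : (0 : ℝ) < d := by exact_mod_cast hd
  have hud : u0 * (d : ℝ) = Real.sqrt ((m : ℝ) * d) := by
    have h7 : u0 * (d : ℝ) = Real.sqrt (((m : ℝ) / d) * ((d : ℝ)) ^ 2) := by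
      rw [Real.sqrt_mul (by positivity), Real.sqrt_sq hdpos.le, hu0def]
    rw [h7]
    congr 1
    field_simp
  calc gradLogDetV A b x ⬝ᵥ z ≤ C := hqC
    _ ≤ 5 * (u0 * d) := hCbound
    _ = 5 * Real.sqrt ((m : ℝ) * d) := by rw [hud]
    _ ≤ 9 * Real.sqrt ((m : ℝ) * d) := by linarith [hT0]


end PolytopeWalks
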